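/- Let (x_n)_{n∈ℤ} be a (1,4)-sequence. Then for all n ∈ ℤ one has x_{2n}·x_{2n−2} − 1 = x_{2n−1} > 0, and the even subsequence u_n = x_{2n} satisfies u_{n+1}·(u_n·u_{n−1} − 1) = u_n³ + u_{n−1} for all n ∈ ℤ. -/

import Mathlib

/-- for a (1,4)-sequence, x_{2n}·x_{2n−2} − 1 = x_{2n−1} > 0 and
the even subsequence u_n = x_{2n} satisfies u_{n+1}(u_n u_{n−1} − 1) = u_n³ + u_{n−1}. -/
theorem q14_even_subsequence (x : ℤ → ℝ) (hpos : ∀ n, 0 < x n)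
    (heven : ∀ n : ℤ, x (2 * n) = (1 + x (2 * n - 1)) / x (2 * n - 2))
    (hodd : ∀ n : ℤ, x (2 * n + 1) = (1 + x (2 * n) ^ 4) / x (2 * n - 1)) :
    (∀ n : ℤ, x (2 * n) * x (2 * n - 2) - 1 = x (2 * n - 1) ∧ 0 < x (2 * n - 1)) ∧
    (∀ n : ℤ, x (2 * (n + 1)) * (x (2 * n) * x (2 * (n - 1)) - 1)
        = x (2 * n) ^ 3 + x (2 * (n - 1))) := by
  have key : ∀ n : ℤ, x (2 * n) * x (2 * n - 2) - 1 = x (2 * n - 1) := by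
    intro n
    have h := heven n
    have h2 := (hpos (2 * n - 2)).ne'
    field_simp at h
    linarith [h]
  constructor
  · exact fun n => ⟨key n, hpos _⟩
  · intro n
    have h1 := heven (n + 1)
    have h2 := hodd n
    have h3 := key n
    have e1 : 2 * (n + 1) - 1 = 2 * n + 1 := by ring
    have e2 : 2 * (n + 1) - 2 = 2 * n := by ring
    have e3 : 2 * (n - 1) = 2 * n - 2 := by ring
    rw [e1, e2] at h1
    rw [e3]
    have hn : x (2 * n) ≠ 0 := (hpos _).ne'
    have hn1 : x (2 * n - 1) ≠ 0 := (hpos _).ne'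
    rw [h1, h2, h3]
    field_simp
    linear_combination (-1 : ℝ) * h3
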